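/- Let g_n be the number of permutations of length n avoiding k-σ and h_n the number avoiding k-σ-k, where σ is a contiguous pattern and k is greater than all letters of σ. Then h_{n+1} = Σ_{i=0}^{n} C(n,i) g_i g_{n-i} for all n ≥ 0. -/

import Mathlib

/-- `l` is a permutation of `{1, …, n}`. -/
def IsPermOf (n : ℕ) (l : List ℕ) : Prop :=
  l.Perm ((List.range n).map (· + 1))

/-- The word `w` forms the partially ordered pattern `σ`. -/
def FormsPOP (σ w : List ℕ) : Prop :=
  w.length = σ.length ∧
  ∀ i j, i < σ.length → j < σ.length →
    σ.getD i 0 < σ.getD j 0 → w.getD i 0 < w.getD j 0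

/-- occurrence of `k-σ`: a large element to the left of a consecutive occurrence of `σ`. -/
def OccursKS (σ π : List ℕ) : Prop :=
  ∃ A x B w C, π = A ++ x :: (B ++ w ++ C) ∧ FormsPOP σ w ∧ ∀ y ∈ w, y < x

/-- occurrence of `k-σ-k`: a consecutive occurrence of `σ` with a larger element on each side. -/
def OccursKSK (σ π : List ℕ) : Prop :=
  ∃ A x B w C y D, π = A ++ x :: (B ++ w ++ C ++ y :: D) ∧ FormsPOP σ w ∧
    (∀ z ∈ w, z < x) ∧ (∀ z ∈ w, z < y)


def OccursC (σ π : List ℕ) : Prop :=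
  ∃ B w C, π = B ++ w ++ C ∧ FormsPOP σ w

def OccursSK (σ π : List ℕ) : Prop :=
  ∃ B w C y D, π = B ++ w ++ C ++ y :: D ∧ FormsPOP σ w ∧ ∀ z ∈ w, z < y

lemma mid_split {α : Type*} {l₁ l₂ X Y : List α} {M : α}
    (h : l₁ ++ l₂ = X ++ M :: Y) :
    (∃ Z, l₁ = X ++ M :: Z ∧ Z ++ l₂ = Y) ∨ (∃ Z, X = l₁ ++ Z ∧ l₂ = Z ++ M :: Y) := by
  rcases List.append_eq_append_iff.mp h with ⟨a, ha1, ha2⟩ | ⟨c, hc1, hc2⟩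
  · exact Or.inr ⟨a, ha1, ha2⟩
  · cases c with
    | nil => exact Or.inr ⟨[], by simp [hc1], by simpa using hc2.symm⟩
    | cons m c' =>
      simp only [List.cons_append] at hc2
      injection hc2 with h1 h2
      exact Or.inl ⟨c', by rw [hc1, ← h1], h2.symm⟩

lemma occursKS_split {σ L R : List ℕ} {M : ℕ}
    (hlt : ∀ a ∈ L ++ R, a < M) :
    OccursKS σ (L ++ M :: R) ↔ OccursKS σ L ∨ OccursC σ R := by
  constructor
  · rintro ⟨A, x, B, w, C, heq, hw, hwx⟩
    rw [show A ++ x :: (B ++ w ++ C) = A ++ (x :: (B ++ (w ++ C))) by simp] at heq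
    rcases mid_split heq.symm with ⟨Z, _, hZ⟩ | ⟨Z, hL, hrest⟩
    · right
      exact ⟨Z ++ x :: B, w, C, by rw [← hZ]; simp, hw⟩
    · cases Z with
      | nil =>
        right
        simp only [List.nil_append] at hrest
        injection hrest with h1 h2
        exact ⟨B, w, C, by rw [← h2]; simp, hw⟩
      | cons x' Z' =>
        simp only [List.cons_append] at hrest
        injection hrest with h1 h2
        subst h1
        have hxL : x ∈ L := by rw [hL]; simp
        rcases mid_split h2 with ⟨Z₂, _, hZ₂⟩ | ⟨Z₂, hZ', hrest2⟩
        · right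
          exact ⟨Z₂, w, C, by rw [← hZ₂]; simp, hw⟩
        · rcases mid_split hrest2 with ⟨Z₃, hwZ, _⟩ | ⟨Z₃, hZ₂, hC⟩
          · exfalso
            have hMw : M ∈ w := by rw [hwZ]; simp
            have h3 := hwx M hMw
            have h4 := hlt x (by simp [hxL])
            omega
          · left
            exact ⟨A, x, B, w, Z₃, by rw [hL, hZ', hZ₂]; simp, hw, hwx⟩
  · rintro (⟨A, x, B, w, C, heq, hw, hwx⟩ | ⟨B, w, C, heq, hw⟩)
    · subst heq
      exact ⟨A, x, B, w, C ++ M :: R, by simp, hw, hwx⟩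
    · subst heq
      refine ⟨L, M, B, w, C, by simp, hw, fun y hy => hlt y ?_⟩
      simp [hy]

lemma occursSK_split {σ L R : List ℕ} {M : ℕ}
    (hlt : ∀ a ∈ L ++ R, a < M) :
    OccursSK σ (L ++ M :: R) ↔ OccursC σ L ∨ OccursSK σ R := by
  constructor
  · rintro ⟨B, w, C, y, D, heq, hw, hwy⟩
    rw [show B ++ w ++ C ++ y :: D = B ++ (w ++ (C ++ y :: D)) by simp] at heq
    rcases mid_split heq.symm with ⟨Z, _, hZ⟩ | ⟨Z, hB, hrest⟩
    · right
      exact ⟨Z, w, C, y, D, by rw [← hZ]; simp, hw, hwy⟩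
    · rcases mid_split hrest with ⟨Z₂, hwZ, hZ₂⟩ | ⟨Z₂, hZ, hrest2⟩
      · exfalso
        have hMw : M ∈ w := by rw [hwZ]; simp
        have h3 := hwy M hMw
        have h4 : y ∈ R := by rw [← hZ₂]; simp
        have := hlt y (by simp [h4])
        omega
      · left
        exact ⟨B, w, Z₂, by rw [hB, hZ]; simp, hw⟩
  · rintro (⟨B, w, C, heq, hw⟩ | ⟨B, w, C, y, D, heq, hw, hwy⟩)
    · subst heq
      refine ⟨B, w, C, M, R, by simp, hw, fun z hz => hlt z ?_⟩
      simp [hz]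
    · subst heq
      exact ⟨L ++ M :: B, w, C, y, D, by simp, hw, hwy⟩

lemma occursKSK_split {σ L R : List ℕ} {M : ℕ}
    (hlt : ∀ a ∈ L ++ R, a < M) :
    OccursKSK σ (L ++ M :: R) ↔ OccursKS σ L ∨ OccursSK σ R := by
  constructor
  · rintro ⟨A, x, B, w, C, y, D, heq, hw, hwx, hwy⟩
    rw [show A ++ x :: (B ++ w ++ C ++ y :: D) = A ++ (x :: (B ++ (w ++ (C ++ y :: D)))) by simp] at heq
    rcases mid_split heq.symm with ⟨Z, _, hZ⟩ | ⟨Z, hL, hrest⟩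
    · right
      exact ⟨Z ++ x :: B, w, C, y, D, by rw [← hZ]; simp, hw, hwy⟩
    · cases Z with
      | nil =>
        right
        simp only [List.nil_append] at hrest
        injection hrest with h1 h2
        exact ⟨B, w, C, y, D, by rw [← h2]; simp, hw, hwy⟩
      | cons x' Z' =>
        simp only [List.cons_append] at hrest
        injection hrest with h1 h2
        subst h1
        have hxL : x ∈ L := by rw [hL]; simp
        rcases mid_split h2 with ⟨Z₂, _, hZ₂⟩ | ⟨Z₂, hZ', hrest2⟩
        · right
          exact ⟨Z₂, w, C, y, D, by rw [← hZ₂]; simp, hw, hwy⟩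
        · rcases mid_split hrest2 with ⟨Z₃, hwZ, _⟩ | ⟨Z₃, hZ₂2, _⟩
          · exfalso
            have hMw : M ∈ w := by rw [hwZ]; simp
            have h3 := hwx M hMw
            have h4 := hlt x (by simp [hxL])
            omega
          · left
            exact ⟨A, x, B, w, Z₃, by rw [hL, hZ', hZ₂2]; simp, hw, hwx⟩
  · rintro (⟨A, x, B, w, C, heq, hw, hwx⟩ | ⟨B, w, C, y, D, heq, hw, hwy⟩)
    · subst heq
      refine ⟨A, x, B, w, C, M, R, by simp, hw, hwx, fun z hz => hlt z ?_⟩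
      simp [hz]
    · subst heq
      refine ⟨L, M, B, w, C, y, D, by simp, hw, fun z hz => hlt z ?_, hwy⟩
      simp [hz]

-- assume part1 defs; re-declare for testing
def OrdOn (f : ℕ → ℕ) (l : List ℕ) : Prop :=
  ∀ x ∈ l, ∀ y ∈ l, (x < y ↔ f x < f y)

lemma ordOn_sublist {f : ℕ → ℕ} {l l' : List ℕ} (h : OrdOn f l) (hs : ∀ x ∈ l', x ∈ l) :
    OrdOn f l' := fun x hx y hy => h x (hs x hx) y (hs y hy)

lemma formsPOP_map_iff {σ w : List ℕ} {f : ℕ → ℕ} (h : OrdOn f w) :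
    FormsPOP σ (w.map f) ↔ FormsPOP σ w := by
  have hget : ∀ i, i < w.length → (w.map f).getD i 0 = f (w.getD i 0) := by
    intro i hi
    rw [List.getD_eq_getElem _ _ (by simpa using hi), List.getD_eq_getElem _ _ hi,
      List.getElem_map]
  have hmem : ∀ i, i < w.length → w.getD i 0 ∈ w := by
    intro i hi
    rw [List.getD_eq_getElem _ _ hi]
    exact List.getElem_mem _
  constructor
  · rintro ⟨hlen, hord⟩
    rw [List.length_map] at hlen
    refine ⟨hlen, fun i j hi hj hij => ?_⟩
    have := hord i j hi hj hij
    rw [hget i (hlen ▸ hi), hget j (hlen ▸ hj)] at this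
    exact ((h _ (hmem i (hlen ▸ hi)) _ (hmem j (hlen ▸ hj)))).mpr this
  · rintro ⟨hlen, hord⟩
    refine ⟨by simpa using hlen, fun i j hi hj hij => ?_⟩
    rw [hget i (hlen ▸ hi), hget j (hlen ▸ hj)]
    exact ((h _ (hmem i (hlen ▸ hi)) _ (hmem j (hlen ▸ hj)))).mp (hord i j hi hj hij)

lemma occursKS_map_iff {σ l : List ℕ} {f : ℕ → ℕ} (h : OrdOn f l) :
    OccursKS σ (l.map f) ↔ OccursKS σ l := by
  constructor
  · rintro ⟨A, x, B, w, C, heq, hw, hwx⟩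
    rw [show A ++ x :: (B ++ w ++ C) = A ++ ([x] ++ (B ++ (w ++ C))) by simp] at heq
    rw [List.map_eq_append_iff] at heq
    obtain ⟨A₀, r₀, rfl, hA, hr⟩ := heq
    rw [List.map_eq_append_iff] at hr
    obtain ⟨x₁, r₁, rfl, hx1, hr1⟩ := hr
    rw [List.map_eq_append_iff] at hr1
    obtain ⟨B₀, r₂, rfl, hB, hr2⟩ := hr1
    rw [List.map_eq_append_iff] at hr2
    obtain ⟨w₀, C₀, rfl, hw0, hC⟩ := hr2
    obtain ⟨x₀, hx0nil, hfx⟩ : ∃ x₀, x₁ = [x₀] ∧ f x₀ = x := by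
      cases x₁ with
      | nil => simp at hx1
      | cons a t =>
        simp only [List.map_cons] at hx1
        injection hx1 with e1 e2
        have : t = [] := by simpa using congrArg List.length e2
        exact ⟨a, by rw [this], e1⟩
    subst hx0nil
    have hsub : ∀ z ∈ w₀, z ∈ A₀ ++ ([x₀] ++ (B₀ ++ (w₀ ++ C₀))) := by intro z hz; simp [hz]
    refine ⟨A₀, x₀, B₀, w₀, C₀, by simp, ?_, ?_⟩
    · rw [← formsPOP_map_iff (ordOn_sublist h hsub), hw0]
      exact hw
    · intro z hz
      have hzmem : z ∈ A₀ ++ ([x₀] ++ (B₀ ++ (w₀ ++ C₀))) := hsub z hz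
      have hxmem : x₀ ∈ A₀ ++ ([x₀] ++ (B₀ ++ (w₀ ++ C₀))) := by simp
      refine (h z hzmem x₀ hxmem).mpr ?_
      rw [hfx]
      apply hwx
      rw [← hw0]
      exact List.mem_map_of_mem (f := f) hz
  · rintro ⟨A, x, B, w, C, rfl, hw, hwx⟩
    have hsub : ∀ z ∈ w, z ∈ A ++ x :: (B ++ w ++ C) := by intro z hz; simp [hz]
    refine ⟨A.map f, f x, B.map f, w.map f, C.map f, by simp, ?_, ?_⟩
    · exact (formsPOP_map_iff (ordOn_sublist h hsub)).mpr hw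
    · rintro z hz
      rw [List.mem_map] at hz
      obtain ⟨z₀, hz₀, rfl⟩ := hz
      exact (h z₀ (hsub z₀ hz₀) x (by simp)).mp (hwx z₀ hz₀)

lemma occursC_map_iff {σ l : List ℕ} {f : ℕ → ℕ} (h : OrdOn f l) :
    OccursC σ (l.map f) ↔ OccursC σ l := by
  constructor
  · rintro ⟨B, w, C, heq, hw⟩
    rw [show B ++ w ++ C = B ++ (w ++ C) by simp] at heq
    rw [List.map_eq_append_iff] at heq
    obtain ⟨B₀, r₁, rfl, hB, hr1⟩ := heq
    rw [List.map_eq_append_iff] at hr1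
    obtain ⟨w₀, C₀, rfl, hw0, hC⟩ := hr1
    have hsub : ∀ z ∈ w₀, z ∈ B₀ ++ (w₀ ++ C₀) := by intro z hz; simp [hz]
    refine ⟨B₀, w₀, C₀, by simp, ?_⟩
    rw [← formsPOP_map_iff (ordOn_sublist h hsub), hw0]
    exact hw
  · rintro ⟨B, w, C, rfl, hw⟩
    have hsub : ∀ z ∈ w, z ∈ B ++ w ++ C := by intro z hz; simp [hz]
    exact ⟨B.map f, w.map f, C.map f, by simp,
      (formsPOP_map_iff (ordOn_sublist h hsub)).mpr hw⟩

lemma occursSK_map_iff {σ l : List ℕ} {f : ℕ → ℕ} (h : OrdOn f l) :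
    OccursSK σ (l.map f) ↔ OccursSK σ l := by
  constructor
  · rintro ⟨B, w, C, y, D, heq, hw, hwy⟩
    rw [show B ++ w ++ C ++ y :: D = B ++ (w ++ (C ++ ([y] ++ D))) by simp] at heq
    rw [List.map_eq_append_iff] at heq
    obtain ⟨B₀, r₁, rfl, hB, hr1⟩ := heq
    rw [List.map_eq_append_iff] at hr1
    obtain ⟨w₀, r₂, rfl, hw0, hr2⟩ := hr1
    rw [List.map_eq_append_iff] at hr2
    obtain ⟨C₀, r₃, rfl, hC, hr3⟩ := hr2
    rw [List.map_eq_append_iff] at hr3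
    obtain ⟨y₁, D₀, rfl, hy1, hD⟩ := hr3
    obtain ⟨y₀, hy0nil, hfy⟩ : ∃ y₀, y₁ = [y₀] ∧ f y₀ = y := by
      cases y₁ with
      | nil => simp at hy1
      | cons a t =>
        simp only [List.map_cons] at hy1
        injection hy1 with e1 e2
        have : t = [] := by simpa using congrArg List.length e2
        exact ⟨a, by rw [this], e1⟩
    subst hy0nil
    have hsub : ∀ z ∈ w₀, z ∈ B₀ ++ (w₀ ++ (C₀ ++ ([y₀] ++ D₀))) := by
      intro z hz; simp [hz]
    refine ⟨B₀, w₀, C₀, y₀, D₀, by simp, ?_, ?_⟩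
    · rw [← formsPOP_map_iff (ordOn_sublist h hsub), hw0]
      exact hw
    · intro z hz
      have hzmem := hsub z hz
      have hymem : y₀ ∈ B₀ ++ (w₀ ++ (C₀ ++ ([y₀] ++ D₀))) := by simp
      refine (h z hzmem y₀ hymem).mpr ?_
      rw [hfy]
      apply hwy
      rw [← hw0]
      exact List.mem_map_of_mem (f := f) hz
  · rintro ⟨B, w, C, y, D, rfl, hw, hwy⟩
    have hsub : ∀ z ∈ w, z ∈ B ++ w ++ C ++ y :: D := by intro z hz; simp [hz]
    refine ⟨B.map f, w.map f, C.map f, f y, D.map f, by simp, ?_, ?_⟩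
    · exact (formsPOP_map_iff (ordOn_sublist h hsub)).mpr hw
    · rintro z hz
      rw [List.mem_map] at hz
      obtain ⟨z₀, hz₀, rfl⟩ := hz
      exact (h z₀ (hsub z₀ hz₀) y (by simp)).mp (hwy z₀ hz₀)


noncomputable def compress (s : Finset ℕ) (v : ℕ) : ℕ :=
  if h : v ∈ s then ((s.orderIsoOfFin rfl).symm ⟨v, h⟩ : Fin s.card).val + 1 else 0

noncomputable def expand (s : Finset ℕ) (j : ℕ) : ℕ :=
  if h : j - 1 < s.card then ((s.orderIsoOfFin rfl) ⟨j - 1, h⟩ : {x // x ∈ s}).val else 0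

lemma compress_lt_iff {s : Finset ℕ} {v w : ℕ} (hv : v ∈ s) (hw : w ∈ s) :
    v < w ↔ compress s v < compress s w := by
  unfold compress
  rw [dif_pos hv, dif_pos hw]
  have h1 : (⟨v, hv⟩ : {x // x ∈ s}) < ⟨w, hw⟩ ↔ v < w := Subtype.mk_lt_mk
  rw [← h1, ← OrderIso.lt_iff_lt (s.orderIsoOfFin rfl).symm, Fin.lt_def]
  omega

lemma compress_mem {s : Finset ℕ} {v : ℕ} (hv : v ∈ s) :
    1 ≤ compress s v ∧ compress s v ≤ s.card := by
  unfold compress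
  rw [dif_pos hv]
  have := ((s.orderIsoOfFin rfl).symm ⟨v, hv⟩).isLt
  omega

lemma expand_compress {s : Finset ℕ} {v : ℕ} (hv : v ∈ s) :
    expand s (compress s v) = v := by
  unfold expand compress
  rw [dif_pos hv]
  have hlt : (((s.orderIsoOfFin rfl).symm ⟨v, hv⟩ : Fin s.card).val + 1) - 1 < s.card := by
    have := ((s.orderIsoOfFin rfl).symm ⟨v, hv⟩).isLt
    omega
  rw [dif_pos hlt]
  have : (⟨(((s.orderIsoOfFin rfl).symm ⟨v, hv⟩ : Fin s.card).val + 1) - 1, hlt⟩ : Fin s.card)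
      = (s.orderIsoOfFin rfl).symm ⟨v, hv⟩ := by
    apply Fin.ext
    simp
  rw [this, OrderIso.apply_symm_apply]

lemma expand_mem {s : Finset ℕ} {j : ℕ} (h1 : 1 ≤ j) (h2 : j ≤ s.card) :
    expand s j ∈ s := by
  unfold expand
  rw [dif_pos (by omega)]
  exact ((s.orderIsoOfFin rfl) ⟨j - 1, by omega⟩).2

lemma compress_expand {s : Finset ℕ} {j : ℕ} (h1 : 1 ≤ j) (h2 : j ≤ s.card) :
    compress s (expand s j) = j := by
  have hlt : j - 1 < s.card := by omega
  have hmem : expand s j ∈ s := expand_mem h1 h2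
  unfold compress
  rw [dif_pos hmem]
  have : (⟨expand s j, hmem⟩ : {x // x ∈ s}) = (s.orderIsoOfFin rfl) ⟨j - 1, hlt⟩ := by
    apply Subtype.ext
    show expand s j = _
    unfold expand
    exact dif_pos hlt
  rw [this, OrderIso.symm_apply_apply]
  simp only [Fin.val_mk]
  omega


-- dependencies (copies)
def pbase (n : ℕ) : List ℕ := (List.range n).map (· + 1)

lemma pbase_nodup (n : ℕ) : (pbase n).Nodup :=
  List.Nodup.map (fun a b => by omega) List.nodup_range

lemma mem_pbase {n x : ℕ} : x ∈ pbase n ↔ 1 ≤ x ∧ x ≤ n := by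
  simp only [pbase, List.mem_map, List.mem_range]
  constructor
  · rintro ⟨a, ha, rfl⟩; omega
  · rintro ⟨h1, h2⟩; exact ⟨x - 1, by omega, by omega⟩

lemma pbase_toFinset (n : ℕ) : (pbase n).toFinset = Finset.Icc 1 n := by
  ext x
  rw [List.mem_toFinset, mem_pbase, Finset.mem_Icc]

lemma pbase_length (n : ℕ) : (pbase n).length = n := by simp [pbase]

lemma expand_lt_iff {s : Finset ℕ} {x y : ℕ} (hx1 : 1 ≤ x) (hx2 : x ≤ s.card)
    (hy1 : 1 ≤ y) (hy2 : y ≤ s.card) : x < y ↔ expand s x < expand s y := by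
  have h := compress_lt_iff (expand_mem hx1 hx2) (expand_mem hy1 hy2)
  rw [compress_expand hx1 hx2, compress_expand hy1 hy2] at h
  exact h.symm

lemma ordOn_compress {L : List ℕ} : OrdOn (compress L.toFinset) L :=
  fun x hx y hy => compress_lt_iff (List.mem_toFinset.mpr hx) (List.mem_toFinset.mpr hy)

lemma compress_injOn {s : Finset ℕ} {v w : ℕ} (hv : v ∈ s) (hw : w ∈ s)
    (h : compress s v = compress s w) : v = w := by
  rcases lt_trichotomy v w with hlt | he | hgt
  · exact absurd ((compress_lt_iff hv hw).mp hlt) (by omega)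
  · exact he
  · exact absurd ((compress_lt_iff hw hv).mp hgt) (by omega)

lemma std_perm {L : List ℕ} (h : L.Nodup) :
    (L.map (compress L.toFinset)).Perm (pbase L.length) := by
  have hcard : L.toFinset.card = L.length := List.toFinset_card_of_nodup h
  apply List.perm_of_nodup_nodup_toFinset_eq
  · exact List.Nodup.map_on
      (fun x hx y hy => compress_injOn (List.mem_toFinset.mpr hx) (List.mem_toFinset.mpr hy)) h
  · exact pbase_nodup _
  · rw [pbase_toFinset]
    ext j
    simp only [List.mem_toFinset, List.mem_map, Finset.mem_Icc]
    constructor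
    · rintro ⟨v, hv, rfl⟩
      have := compress_mem (List.mem_toFinset.mpr hv)
      omega
    · rintro ⟨h1, h2⟩
      refine ⟨expand L.toFinset j, ?_, compress_expand h1 (by omega)⟩
      exact List.mem_toFinset.mp (expand_mem h1 (by omega))

lemma std_roundtrip {L : List ℕ} :
    (L.map (compress L.toFinset)).map (expand L.toFinset) = L := by
  rw [List.map_map]
  have : ∀ a ∈ L, (expand L.toFinset ∘ compress L.toFinset) a = id a :=
    fun a ha => expand_compress (List.mem_toFinset.mpr ha)
  rw [List.map_congr_left this, List.map_id]

section unstd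
variable {s : Finset ℕ} {l : List ℕ} {k : ℕ}

lemma unstd_nodup (hcard : s.card = k) (hl : l.Perm (pbase k)) :
    (l.map (expand s)).Nodup := by
  have hmem : ∀ x ∈ l, 1 ≤ x ∧ x ≤ k := fun x hx => mem_pbase.mp (hl.mem_iff.mp hx)
  refine List.Nodup.map_on (fun x hx y hy hxy => ?_) (hl.nodup_iff.mpr (pbase_nodup k))
  obtain ⟨hx1, hx2⟩ := hmem x hx
  obtain ⟨hy1, hy2⟩ := hmem y hy
  have h1 := expand_lt_iff (s := s) hx1 (by omega) hy1 (by omega)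
  have h2 := expand_lt_iff (s := s) hy1 (by omega) hx1 (by omega)
  omega

lemma unstd_toFinset (hcard : s.card = k) (hl : l.Perm (pbase k)) :
    (l.map (expand s)).toFinset = s := by
  have hmem : ∀ x ∈ l, 1 ≤ x ∧ x ≤ k := fun x hx => mem_pbase.mp (hl.mem_iff.mp hx)
  ext v
  simp only [List.mem_toFinset, List.mem_map]
  constructor
  · rintro ⟨j, hj, rfl⟩
    obtain ⟨h1, h2⟩ := hmem j hj
    exact expand_mem h1 (by omega)
  · intro hv
    refine ⟨compress s v, ?_, expand_compress hv⟩
    have := compress_mem hv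
    rw [hl.mem_iff, mem_pbase]
    omega

lemma ordOn_expand (hcard : s.card = k) (hl : l.Perm (pbase k)) :
    OrdOn (expand s) l := by
  intro x hx y hy
  obtain ⟨hx1, hx2⟩ := mem_pbase.mp (hl.mem_iff.mp hx)
  obtain ⟨hy1, hy2⟩ := mem_pbase.mp (hl.mem_iff.mp hy)
  exact expand_lt_iff hx1 (by omega) hy1 (by omega)

lemma unstd_roundtrip (hcard : s.card = k) (hl : l.Perm (pbase k)) :
    (l.map (expand s)).map (compress s) = l := by
  rw [List.map_map]
  have : ∀ a ∈ l, (compress s ∘ expand s) a = id a := by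
    intro a ha
    obtain ⟨h1, h2⟩ := mem_pbase.mp (hl.mem_iff.mp ha)
    exact compress_expand h1 (by omega)
  rw [List.map_congr_left this, List.map_id]

end unstd

lemma split_unique {α : Type*} {M : α} {L R L' R' : List α}
    (h : L ++ M :: R = L' ++ M :: R') (hM : M ∉ L) (hM' : M ∉ L') :
    L = L' ∧ R = R' := by
  rcases List.append_eq_append_iff.mp h with ⟨a, ha1, ha2⟩ | ⟨c, hc1, hc2⟩
  · cases a with
    | nil => simp at ha1 ha2; exact ⟨ha1.symm, (by simpa using ha2.symm : R' = R).symm⟩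
    | cons m t =>
      exfalso
      simp only [List.cons_append] at ha2
      injection ha2 with e1 e2
      apply hM'
      rw [ha1, e1]
      simp
  · cases c with
    | nil => simp at hc1 hc2; exact ⟨hc1, (by simpa using hc2 : R' = R).symm⟩
    | cons m t =>
      exfalso
      simp only [List.cons_append] at hc2
      injection hc2 with e1 e2
      apply hM
      rw [hc1, ← e1]
      simp


def msplit (M : ℕ) (l : List ℕ) : List ℕ × List ℕ :=
  (l.takeWhile (· != M), (l.dropWhile (· != M)).tail)

lemma msplit_spec {M : ℕ} {l : List ℕ} (h : M ∈ l) :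
    l = (msplit M l).1 ++ M :: (msplit M l).2 := by
  induction l with
  | nil => simp at h
  | cons a t ih =>
    by_cases ha : a = M
    · subst ha
      simp [msplit, List.takeWhile, List.dropWhile]
    · have hM : M ∈ t := by
        rcases List.mem_cons.mp h with h' | h'
        · exact absurd h'.symm ha
        · exact h'
      have hne : (a != M) = true := by simpa using ha
      simp only [msplit, List.takeWhile, List.dropWhile, hne]
      simpa [msplit] using ih hM

lemma msplit_eq {M : ℕ} {l L R : List ℕ} (hnd : l.Nodup) (h : l = L ++ M :: R) :
    msplit M l = (L, R) := by
  have hm : M ∈ l := by rw [h]; simp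
  have hspec := msplit_spec hm
  have hndLR : M ∉ L ∧ M ∉ (msplit M l).1 := by
    constructor
    · intro hML
      rw [h] at hnd
      rw [List.nodup_middle] at hnd
      exact (List.nodup_cons.mp hnd).1 (by simp [hML])
    · intro hML
      rw [hspec] at hnd
      rw [List.nodup_middle] at hnd
      exact (List.nodup_cons.mp hnd).1 (by simp [hML])
  have := split_unique (hspec.symm.trans h) hndLR.2 hndLR.1
  rw [Prod.ext_iff]
  exact this

lemma pbase_succ (n : ℕ) : pbase (n + 1) = pbase n ++ [n + 1] := by
  simp [pbase, List.range_succ]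

lemma split_facts {n : ℕ} {l L R : List ℕ} (h : IsPermOf (n+1) l)
    (hs : l = L ++ (n+1) :: R) :
    (L ++ R).Perm (pbase n) ∧ (∀ a ∈ L ++ R, a < n+1) ∧ L.Nodup ∧ R.Nodup ∧
      L.length + R.length = n ∧ L.toFinset ⊆ Finset.Icc 1 n ∧
      R.toFinset = Finset.Icc 1 n \ L.toFinset := by
  have hperm : l.Perm (pbase (n+1)) := h
  have hp1 : (L ++ (n+1) :: R).Perm ((n+1) :: (L ++ R)) := List.perm_middle
  have hp2 : (pbase n ++ [n+1]).Perm ((n+1) :: pbase n) := List.perm_append_singleton _ _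
  have hmain : (L ++ R).Perm (pbase n) := by
    have : ((n+1) :: (L ++ R)).Perm ((n+1) :: pbase n) :=
      (hp1.symm.trans (hs ▸ hperm)).trans ((pbase_succ n ▸ hp2))
    exact this.cons_inv
  have hlt : ∀ a ∈ L ++ R, a < n + 1 := by
    intro a ha
    have := mem_pbase.mp (hmain.mem_iff.mp ha)
    omega
  have hnodLR : (L ++ R).Nodup := hmain.nodup_iff.mpr (pbase_nodup n)
  obtain ⟨hndL, hndR, hdisj⟩ := List.nodup_append.mp hnodLR
  have hlen : L.length + R.length = n := by
    have := hmain.length_eq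
    simpa [pbase_length] using this
  have hLsub : L.toFinset ⊆ Finset.Icc 1 n := by
    intro v hv
    rw [List.mem_toFinset] at hv
    rw [Finset.mem_Icc]
    exact mem_pbase.mp (hmain.mem_iff.mp (by simp [hv]))
  have hRt : R.toFinset = Finset.Icc 1 n \ L.toFinset := by
    ext v
    rw [Finset.mem_sdiff, List.mem_toFinset, Finset.mem_Icc, List.mem_toFinset]
    constructor
    · intro hv
      refine ⟨mem_pbase.mp (hmain.mem_iff.mp (by simp [hv])), fun hvL => ?_⟩
      exact hdisj v hvL v hv rfl
    · rintro ⟨hv, hvL⟩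
      have : v ∈ L ++ R := hmain.mem_iff.mpr (mem_pbase.mpr hv)
      rcases List.mem_append.mp this with h' | h'
      · exact absurd h' hvL
      · exact h'
  exact ⟨hmain, hlt, hndL, hndR, hlen, hLsub, hRt⟩

section master
variable {P P₁ P₂ : List ℕ → Prop}

lemma phi_memPow {n : ℕ} {l L R : List ℕ} (h : IsPermOf (n+1) l)
    (hs : l = L ++ (n+1) :: R) :
    L.toFinset ∈ Finset.powersetCard L.length (Finset.Icc 1 n) := by
  obtain ⟨_, _, hndL, _, hlen, hLsub, _⟩ := split_facts h hs
  exact Finset.mem_powersetCard.mpr ⟨hLsub, List.toFinset_card_of_nodup hndL⟩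

lemma phi_permL {n : ℕ} {l L R : List ℕ} (h : IsPermOf (n+1) l)
    (hs : l = L ++ (n+1) :: R) :
    IsPermOf L.length (L.map (compress L.toFinset)) := by
  obtain ⟨_, _, hndL, _, _, _, _⟩ := split_facts h hs
  exact std_perm hndL

lemma phi_permR {n : ℕ} {l L R : List ℕ} (h : IsPermOf (n+1) l)
    (hs : l = L ++ (n+1) :: R) :
    IsPermOf (n - L.length) (R.map (compress R.toFinset)) := by
  obtain ⟨_, _, _, hndR, hlen, _, _⟩ := split_facts h hs
  have : n - L.length = R.length := by omega
  rw [this]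
  exact std_perm hndR

lemma phi_P {n : ℕ} {l L R : List ℕ} (h : IsPermOf (n+1) l)
    (hs : l = L ++ (n+1) :: R)
    (inv₁ : ∀ (f : ℕ → ℕ) (m : List ℕ), OrdOn f m → (P₁ (m.map f) ↔ P₁ m))
    (inv₂ : ∀ (f : ℕ → ℕ) (m : List ℕ), OrdOn f m → (P₂ (m.map f) ↔ P₂ m))
    (hsplit : ∀ (L' R' : List ℕ) (M : ℕ), (∀ a ∈ L' ++ R', a < M) →
      (P (L' ++ M :: R') ↔ P₁ L' ∧ P₂ R'))
    (hP : P l) :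
    P₁ (L.map (compress L.toFinset)) ∧ P₂ (R.map (compress R.toFinset)) := by
  obtain ⟨_, hlt, _, _, _, _, _⟩ := split_facts h hs
  have hP' : P₁ L ∧ P₂ R := (hsplit L R (n+1) hlt).mp (hs ▸ hP)
  exact ⟨(inv₁ _ L ordOn_compress).mpr hP'.1, (inv₂ _ R ordOn_compress).mpr hP'.2⟩

-- psi side
variable {n i : ℕ} {s : Finset ℕ} {l₁ l₂ : List ℕ}

lemma psi_facts (hi : i ≤ n) (hsmem : s ∈ Finset.powersetCard i (Finset.Icc 1 n))
    (h₁ : IsPermOf i l₁) (h₂ : IsPermOf (n - i) l₂) :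
    (l₁.map (expand s)).Nodup ∧ (l₁.map (expand s)).toFinset = s ∧
    (l₂.map (expand (Finset.Icc 1 n \ s))).Nodup ∧
    (l₂.map (expand (Finset.Icc 1 n \ s))).toFinset = Finset.Icc 1 n \ s := by
  obtain ⟨hsub, hcard⟩ := Finset.mem_powersetCard.mp hsmem
  have htcard : (Finset.Icc 1 n \ s).card = n - i := by
    rw [Finset.card_sdiff_of_subset hsub, Nat.card_Icc, hcard]; omega
  exact ⟨unstd_nodup hcard h₁, unstd_toFinset hcard h₁,
    unstd_nodup htcard h₂, unstd_toFinset htcard h₂⟩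

lemma psi_perm (hi : i ≤ n) (hsmem : s ∈ Finset.powersetCard i (Finset.Icc 1 n))
    (h₁ : IsPermOf i l₁) (h₂ : IsPermOf (n - i) l₂) :
    IsPermOf (n+1) (l₁.map (expand s) ++ (n+1) :: l₂.map (expand (Finset.Icc 1 n \ s))) := by
  obtain ⟨hnd1, ht1, hnd2, ht2⟩ := psi_facts hi hsmem h₁ h₂
  obtain ⟨hsub, hcard⟩ := Finset.mem_powersetCard.mp hsmem
  have hmemL : ∀ v ∈ l₁.map (expand s), v ∈ s := by
    intro v hv; rw [← List.mem_toFinset, ht1] at hv; exact hv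
  have hmemR : ∀ v ∈ l₂.map (expand (Finset.Icc 1 n \ s)), v ∈ Finset.Icc 1 n \ s := by
    intro v hv; rw [← List.mem_toFinset, ht2] at hv; exact hv
  have hbound : ∀ v ∈ l₁.map (expand s) ++ l₂.map (expand (Finset.Icc 1 n \ s)),
      1 ≤ v ∧ v ≤ n := by
    intro v hv
    rcases List.mem_append.mp hv with h' | h'
    · exact Finset.mem_Icc.mp (hsub (hmemL v h'))
    · exact Finset.mem_Icc.mp (Finset.mem_sdiff.mp (hmemR v h')).1
  have hnodup : (l₁.map (expand s) ++ (n+1) :: l₂.map (expand (Finset.Icc 1 n \ s))).Nodup := by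
    rw [List.nodup_middle, List.nodup_cons]
    constructor
    · intro hmem
      have := hbound _ hmem
      omega
    · rw [List.nodup_append]
      refine ⟨hnd1, hnd2, fun a haL b haR hab => ?_⟩
      subst hab
      have h1 := hmemL a haL
      have h2 := (Finset.mem_sdiff.mp (hmemR a haR)).2
      exact h2 h1
  apply List.perm_of_nodup_nodup_toFinset_eq hnodup (pbase_nodup (n+1))
  rw [pbase_toFinset]
  rw [List.toFinset_append, List.toFinset_cons, ht1, ht2]
  ext v
  simp only [Finset.mem_union, Finset.mem_insert, Finset.mem_sdiff, Finset.mem_Icc]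
  constructor
  · rintro (hv | hv | ⟨⟨h1, h2⟩, _⟩)
    · have := Finset.mem_Icc.mp (hsub hv); omega
    · omega
    · omega
  · intro ⟨h1, h2⟩
    by_cases hvn : v = n + 1
    · right; left; exact hvn
    · by_cases hvs : v ∈ s
      · left; exact hvs
      · right; right; exact ⟨⟨h1, by omega⟩, hvs⟩

lemma psi_P (hi : i ≤ n) (hsmem : s ∈ Finset.powersetCard i (Finset.Icc 1 n))
    (h₁ : IsPermOf i l₁) (h₂ : IsPermOf (n - i) l₂)
    (inv₁ : ∀ (f : ℕ → ℕ) (m : List ℕ), OrdOn f m → (P₁ (m.map f) ↔ P₁ m))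
    (inv₂ : ∀ (f : ℕ → ℕ) (m : List ℕ), OrdOn f m → (P₂ (m.map f) ↔ P₂ m))
    (hsplit : ∀ (L' R' : List ℕ) (M : ℕ), (∀ a ∈ L' ++ R', a < M) →
      (P (L' ++ M :: R') ↔ P₁ L' ∧ P₂ R'))
    (hP₁ : P₁ l₁) (hP₂ : P₂ l₂) :
    P (l₁.map (expand s) ++ (n+1) :: l₂.map (expand (Finset.Icc 1 n \ s))) := by
  obtain ⟨hnd1, ht1, hnd2, ht2⟩ := psi_facts hi hsmem h₁ h₂
  obtain ⟨hsub, hcard⟩ := Finset.mem_powersetCard.mp hsmem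
  have htcard : (Finset.Icc 1 n \ s).card = n - i := by
    rw [Finset.card_sdiff_of_subset hsub, Nat.card_Icc, hcard]; omega
  have hlt : ∀ a ∈ l₁.map (expand s) ++ l₂.map (expand (Finset.Icc 1 n \ s)), a < n + 1 := by
    intro a ha
    rcases List.mem_append.mp ha with h' | h'
    · have : a ∈ s := by rw [← List.mem_toFinset, ht1] at h'; exact h'
      have := Finset.mem_Icc.mp (hsub this); omega
    · have : a ∈ Finset.Icc 1 n \ s := by rw [← List.mem_toFinset, ht2] at h'; exact h'
      have := Finset.mem_Icc.mp (Finset.mem_sdiff.mp this).1; omega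
  refine (hsplit _ _ (n+1) hlt).mpr ⟨?_, ?_⟩
  · exact (inv₁ _ l₁ (ordOn_expand hcard h₁)).mpr hP₁
  · exact (inv₂ _ l₂ (ordOn_expand htcard h₂)).mpr hP₂

end master

instance finite_avoiders (m : ℕ) (Q : List ℕ → Prop) :
    Finite {l : List ℕ // IsPermOf m l ∧ Q l} := by
  classical
  apply Finite.of_injective
    (fun x => (⟨x.val, by rw [List.mem_toFinset, List.mem_permutations]; exact x.2.1⟩ :
      {l // l ∈ (pbase m).permutations.toFinset}))
  intro a b hab
  have h2 := congrArg Subtype.val hab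
  exact Subtype.ext h2

lemma mem_split {n : ℕ} {l : List ℕ} (h : IsPermOf (n+1) l) :
    l = (msplit (n+1) l).1 ++ (n+1) :: (msplit (n+1) l).2 :=
  msplit_spec ((List.Perm.mem_iff h).mpr (mem_pbase.mpr ⟨by omega, le_refl _⟩))

lemma sigma_prod_ext {n : ℕ} {Q : ℕ → Finset ℕ → Prop} {G H : ℕ → List ℕ → Prop}
    {a b : Σ i : Fin (n+1), {s : Finset ℕ // Q i.val s} ×
      {l : List ℕ // G i.val l} × {l : List ℕ // H i.val l}}
    (h1 : a.1 = b.1) (h2 : a.2.1.val = b.2.1.val) (h3 : a.2.2.1.val = b.2.2.1.val)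
    (h4 : a.2.2.2.val = b.2.2.2.val) : a = b := by
  obtain ⟨i, ⟨s, hs⟩, ⟨u, hu⟩, ⟨v, hv⟩⟩ := a
  obtain ⟨j, ⟨s', hs'⟩, ⟨u', hu'⟩, ⟨v', hv'⟩⟩ := b
  simp only at h1 h2 h3 h4
  subst h1; subst h2; subst h3; subst h4
  rfl

lemma master {P P₁ P₂ : List ℕ → Prop}
    (inv₁ : ∀ (f : ℕ → ℕ) (m : List ℕ), OrdOn f m → (P₁ (m.map f) ↔ P₁ m))
    (inv₂ : ∀ (f : ℕ → ℕ) (m : List ℕ), OrdOn f m → (P₂ (m.map f) ↔ P₂ m))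
    (hsplit : ∀ (L' R' : List ℕ) (M : ℕ), (∀ a ∈ L' ++ R', a < M) →
      (P (L' ++ M :: R') ↔ P₁ L' ∧ P₂ R'))
    (n : ℕ) :
    Nat.card {l : List ℕ // IsPermOf (n+1) l ∧ P l}
      = ∑ i ∈ Finset.range (n+1), Nat.choose n i *
          (Nat.card {l : List ℕ // IsPermOf i l ∧ P₁ l} *
           Nat.card {l : List ℕ // IsPermOf (n-i) l ∧ P₂ l}) := by
  classical
  have e : {l : List ℕ // IsPermOf (n+1) l ∧ P l} ≃
      (Σ i : Fin (n+1),
        {s : Finset ℕ // s ∈ Finset.powersetCard (i : ℕ) (Finset.Icc 1 n)} ×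
        {l : List ℕ // IsPermOf (i : ℕ) l ∧ P₁ l} ×
        {l : List ℕ // IsPermOf (n - (i : ℕ)) l ∧ P₂ l}) := by
    refine
      { toFun := fun x =>
          ⟨⟨(msplit (n+1) x.val).1.length, by
              have := (split_facts x.2.1 (mem_split x.2.1)).2.2.2.2.1
              omega⟩,
            ⟨(msplit (n+1) x.val).1.toFinset, phi_memPow x.2.1 (mem_split x.2.1)⟩,
            ⟨(msplit (n+1) x.val).1.map (compress (msplit (n+1) x.val).1.toFinset),
              phi_permL x.2.1 (mem_split x.2.1),
              (phi_P x.2.1 (mem_split x.2.1) inv₁ inv₂ hsplit x.2.2).1⟩,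
            ⟨(msplit (n+1) x.val).2.map (compress (msplit (n+1) x.val).2.toFinset),
              phi_permR x.2.1 (mem_split x.2.1),
              (phi_P x.2.1 (mem_split x.2.1) inv₁ inv₂ hsplit x.2.2).2⟩⟩
        invFun := fun y =>
          ⟨y.2.2.1.val.map (expand y.2.1.val) ++
              (n+1) :: y.2.2.2.val.map (expand (Finset.Icc 1 n \ y.2.1.val)),
            psi_perm (by omega) y.2.1.2 y.2.2.1.2.1 y.2.2.2.2.1,
            psi_P (by omega) y.2.1.2 y.2.2.1.2.1 y.2.2.2.2.1 inv₁ inv₂ hsplit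
              y.2.2.1.2.2 y.2.2.2.2.2⟩
        left_inv := ?_
        right_inv := ?_ }
    · rintro ⟨l, hperm, hP⟩
      apply Subtype.ext
      simp only
      have hRt := (split_facts hperm (mem_split hperm)).2.2.2.2.2.2
      rw [std_roundtrip, hRt.symm, std_roundtrip]
      exact (mem_split hperm).symm
    · rintro ⟨i, ⟨s, hs⟩, ⟨l₁, h₁p, h₁P⟩, ⟨l₂, h₂p, h₂P⟩⟩
      have hcard : s.card = (i : ℕ) := (Finset.mem_powersetCard.mp hs).2
      have hsub : s ⊆ Finset.Icc 1 n := (Finset.mem_powersetCard.mp hs).1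
      have htcard : (Finset.Icc 1 n \ s).card = n - (i : ℕ) := by
        rw [Finset.card_sdiff_of_subset hsub, Nat.card_Icc, hcard]; omega
      have hpermC : IsPermOf (n+1) (l₁.map (expand s) ++
          (n+1) :: l₂.map (expand (Finset.Icc 1 n \ s))) :=
        psi_perm (by omega) hs h₁p h₂p
      have hnd : (l₁.map (expand s) ++
          (n+1) :: l₂.map (expand (Finset.Icc 1 n \ s))).Nodup :=
        (List.Perm.nodup_iff hpermC).mpr (pbase_nodup (n+1))
      have hms : msplit (n+1) (l₁.map (expand s) ++
            (n+1) :: l₂.map (expand (Finset.Icc 1 n \ s)))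
          = (l₁.map (expand s), l₂.map (expand (Finset.Icc 1 n \ s))) := msplit_eq hnd rfl
      have hLt : (l₁.map (expand s)).toFinset = s := unstd_toFinset hcard h₁p
      have hRt : (l₂.map (expand (Finset.Icc 1 n \ s))).toFinset = Finset.Icc 1 n \ s :=
        unstd_toFinset htcard h₂p
      have hLlen : (l₁.map (expand s)).length = (i : ℕ) := by
        rw [List.length_map, List.Perm.length_eq h₁p]
        simp [pbase]
      refine sigma_prod_ext
        (Q := fun k s => s ∈ Finset.powersetCard k (Finset.Icc 1 n))
        (G := fun k l => IsPermOf k l ∧ P₁ l)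
        (H := fun k l => IsPermOf (n - k) l ∧ P₂ l) ?_ ?_ ?_ ?_
      · simp only [hms]
        exact Fin.ext hLlen
      · simp only [hms]
        exact hLt
      · simp only [hms]
        rw [hLt, unstd_roundtrip hcard h₁p]
      · simp only [hms]
        rw [hRt, unstd_roundtrip htcard h₂p]
  rw [Nat.card_congr e]
  letI : ∀ i : Fin (n+1), Fintype
      ({s : Finset ℕ // s ∈ Finset.powersetCard (i : ℕ) (Finset.Icc 1 n)} ×
        {l : List ℕ // IsPermOf (i : ℕ) l ∧ P₁ l} ×
        {l : List ℕ // IsPermOf (n - (i : ℕ)) l ∧ P₂ l}) := fun i => Fintype.ofFinite _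
  rw [Nat.card_eq_fintype_card, Fintype.card_sigma]
  rw [← Fin.sum_univ_eq_sum_range (fun i => Nat.choose n i *
    (Nat.card {l : List ℕ // IsPermOf i l ∧ P₁ l} *
     Nat.card {l : List ℕ // IsPermOf (n-i) l ∧ P₂ l})) (n+1)]
  apply Finset.sum_congr rfl
  intro i _
  rw [← Nat.card_eq_fintype_card, Nat.card_prod, Nat.card_prod]
  congr 1
  rw [Nat.card_eq_finsetCard, Finset.card_powersetCard, Nat.card_Icc]
  norm_num

lemma permOf_zero {l : List ℕ} (h : IsPermOf 0 l) : l = [] := by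
  have : l.Perm [] := by simpa [IsPermOf] using h
  exact this.eq_nil

lemma not_occursKS_nil {σ : List ℕ} : ¬ OccursKS σ [] := by
  rintro ⟨A, x, B, w, C, heq, -, -⟩
  have := congrArg List.length heq
  simp [List.length_append] at this

lemma not_occursSK_nil {σ : List ℕ} : ¬ OccursSK σ [] := by
  rintro ⟨B, w, C, y, D, heq, -, -⟩
  have := congrArg List.length heq
  simp [List.length_append] at this


/-- If `g n` counts `(k-σ)`-avoiders of length `n` and `h n` counts
`(k-σ-k)`-avoiders, then `h (n+1) = ∑ C(n,i) gᵢ g_{n-i}`. -/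
theorem count_avoid_ksk_rec (σ : List ℕ) (hσ : σ ≠ [])
    (g h : ℕ → ℕ)
    (hg : ∀ n, g n = Nat.card {l : List ℕ // IsPermOf n l ∧ ¬ OccursKS σ l})
    (hh : ∀ n, h n = Nat.card {l : List ℕ // IsPermOf n l ∧ ¬ OccursKSK σ l}) :
    ∀ n, h (n + 1) = ∑ i ∈ Finset.range (n + 1), Nat.choose n i * (g i * g (n - i)) := by
  classical
  set a : ℕ → ℕ := fun n => Nat.card {l : List ℕ // IsPermOf n l ∧ ¬ OccursKS σ l} with ha_def
  set b : ℕ → ℕ := fun n => Nat.card {l : List ℕ // IsPermOf n l ∧ ¬ OccursSK σ l} with hb_def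
  set c : ℕ → ℕ := fun n => Nat.card {l : List ℕ // IsPermOf n l ∧ ¬ OccursC σ l} with hc_def
  have invKS : ∀ (f : ℕ → ℕ) (m : List ℕ), OrdOn f m →
      ((¬ OccursKS σ (m.map f)) ↔ ¬ OccursKS σ m) :=
    fun f m hf => not_congr (occursKS_map_iff hf)
  have invSK : ∀ (f : ℕ → ℕ) (m : List ℕ), OrdOn f m →
      ((¬ OccursSK σ (m.map f)) ↔ ¬ OccursSK σ m) :=
    fun f m hf => not_congr (occursSK_map_iff hf)
  have invC : ∀ (f : ℕ → ℕ) (m : List ℕ), OrdOn f m →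
      ((¬ OccursC σ (m.map f)) ↔ ¬ OccursC σ m) :=
    fun f m hf => not_congr (occursC_map_iff hf)
  have ha : ∀ n, a (n+1) = ∑ i ∈ Finset.range (n+1), Nat.choose n i * (a i * c (n-i)) := by
    intro n
    exact master invKS invC
      (fun L R M hlt => by rw [not_iff_comm, not_and_or, not_not, not_not, occursKS_split hlt]) n
  have hb : ∀ n, b (n+1) = ∑ i ∈ Finset.range (n+1), Nat.choose n i * (c i * b (n-i)) := by
    intro n
    exact master invC invSK
      (fun L R M hlt => by rw [not_iff_comm, not_and_or, not_not, not_not, occursSK_split hlt]) n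
  have hhh : ∀ n, h (n+1) = ∑ i ∈ Finset.range (n+1), Nat.choose n i * (a i * b (n-i)) := by
    intro n
    rw [hh]
    exact master invKS invSK
      (fun L R M hlt => by rw [not_iff_comm, not_and_or, not_not, not_not, occursKSK_split hlt]) n
  have hab : ∀ n, a n = b n := by
    intro n
    induction n using Nat.strong_induction_on with
    | _ n ih =>
      match n with
      | 0 =>
        apply Nat.card_congr
        apply Equiv.subtypeEquivRight
        intro l
        constructor
        · rintro ⟨h1, -⟩
          refine ⟨h1, ?_⟩
          rw [permOf_zero h1]
          exact not_occursSK_nil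
        · rintro ⟨h1, -⟩
          refine ⟨h1, ?_⟩
          rw [permOf_zero h1]
          exact not_occursKS_nil
      | Nat.succ m =>
        rw [ha m, hb m]
        rw [← Finset.sum_range_reflect (fun i => Nat.choose m i * (c i * b (m-i))) (m+1)]
        apply Finset.sum_congr rfl
        intro j hj
        have hjm : j ≤ m := by
          have := Finset.mem_range.mp hj
          omega
        have h1 : m + 1 - 1 - j = m - j := by omega
        have h2 : m - (m - j) = j := by omega
        rw [h1, h2, Nat.choose_symm hjm, ih j (by omega)]
        ring
  have hcalc := hhh
  intro n
  rw [hcalc n]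
  apply Finset.sum_congr rfl
  intro i hi
  rw [hg i, hg (n - i)]
  have e1 : Nat.card {l : List ℕ // IsPermOf i l ∧ ¬ OccursKS σ l} = a i := rfl
  have e2 : Nat.card {l : List ℕ // IsPermOf (n-i) l ∧ ¬ OccursKS σ l} = a (n - i) := rfl
  rw [e1, e2, hab (n - i)]
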